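/- Let p ≥ 1 be an integer and let a_1,…,a_p be nonnegative reals with Σ_{i=1}^p a_i > 0. Suppose there is no x ∈ {−1, 1}^p with Σ_{i=1}^p a_i x_i = (1/2)·Σ_{i=1}^p a_i. Then for every (β, β₀) ∈ ℝ^p × ℝ, G(β, β₀) > p + 100p². -/
import Mathlib

/-- `θ(x, β₀) = (max{0, x + β₀} − 1)² + (max{0, −x + β₀} − 1)²`. -/
noncomputable def thetaFn (x β₀ : ℝ) : ℝ :=
  (max 0 (x + β₀) - 1) ^ 2 + (max 0 (-x + β₀) - 1) ^ 2

/-- The objective of the (ReLU) reduction instance. -/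
noncomputable def reluObj {p : ℕ} (a : Fin p → ℝ) (β : Fin p → ℝ) (β₀ : ℝ) : ℝ :=
  (max 0 (∑ i, a i * β i + β₀) - (1 / 2) * ∑ i, a i) ^ 2
  + (max 0 (2 * ∑ i, a i * β i + β₀) - ∑ i, a i) ^ 2
  + ∑ j, thetaFn (β j) β₀
  + (max 0 β₀ + 10 * p) ^ 2

lemma theta_ge_one (x b : ℝ) (hb : b ≤ 1/20) : 1 ≤ thetaFn x b := by
  unfold thetaFn
  rcases le_or_gt (x + b) 0 with h1 | h1 <;> rcases le_or_gt (-x + b) 0 with h2 | h2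
  · rw [max_eq_left h1, max_eq_left h2]; norm_num
  · rw [max_eq_left h1, max_eq_right h2.le]; nlinarith [sq_nonneg (-x + b - 1)]
  · rw [max_eq_right h1.le, max_eq_left h2]; nlinarith [sq_nonneg (x + b - 1)]
  · rw [max_eq_right h1.le, max_eq_right h2.le]
    nlinarith [sq_nonneg (x + b - 1), sq_nonneg (-x + b - 1), sq_nonneg x]

lemma theta_eq_one (x : ℝ) (h : thetaFn x 0 = 1) : x = -1 ∨ x = 1 := by
  unfold thetaFn at h
  rcases le_or_gt x 0 with hx | hx
  · left
    rw [max_eq_left (by linarith), max_eq_right (by linarith)] at h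
    nlinarith [sq_nonneg (-x + 0 - 1)]
  · right
    rw [max_eq_right (by linarith), max_eq_left (by linarith)] at h
    nlinarith [sq_nonneg (x + 0 - 1)]

/-- for `p ≥ 1` and nonnegative reals `a₁,…,a_p` with `∑ a_i > 0`, if there
is no `x ∈ {−1,1}^p` with `∑ a_i x_i = ½ ∑ a_i`, then every `(β, β₀)` satisfies
`G(β, β₀) > p + 100 p²`. -/
theorem reluObj_gt_of_no_solution (p : ℕ) (hp : 1 ≤ p)
    (a : Fin p → ℝ) (ha : ∀ i, 0 ≤ a i) (hsum : 0 < ∑ i, a i)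
    (hno : ¬ ∃ x : Fin p → ℝ, (∀ i, x i = -1 ∨ x i = 1) ∧
      ∑ i, a i * x i = (1 / 2) * ∑ i, a i)
    (β : Fin p → ℝ) (β₀ : ℝ) :
    reluObj a β β₀ > (p : ℝ) + 100 * (p : ℝ) ^ 2 := by
  by_contra hcon
  push_neg at hcon
  have hp1 : (1 : ℝ) ≤ (p : ℝ) := by exact_mod_cast hp
  unfold reluObj at hcon
  set S := ∑ i, a i * β i with hS
  set A := ∑ i, a i with hA
  rcases le_or_gt (1/20 : ℝ) β₀ with hb | hb
  · have hm : max 0 β₀ = β₀ := max_eq_right (by linarith)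
    rw [hm] at hcon
    have h1 : (0:ℝ) ≤ (max 0 (S + β₀) - (1/2) * A) ^ 2 := sq_nonneg _
    have h2 : (0:ℝ) ≤ (max 0 (2 * S + β₀) - A) ^ 2 := sq_nonneg _
    have h3 : (0:ℝ) ≤ ∑ j, thetaFn (β j) β₀ := by
      apply Finset.sum_nonneg
      intro j _
      unfold thetaFn; positivity
    nlinarith [sq_nonneg β₀]
  · have hSt : (p : ℝ) ≤ ∑ j, thetaFn (β j) β₀ := by
      calc (p : ℝ) = ∑ _j : Fin p, (1:ℝ) := by simp
      _ ≤ _ := Finset.sum_le_sum fun j _ => theta_ge_one (β j) β₀ hb.le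
    have hM : (0:ℝ) ≤ max 0 β₀ := le_max_left _ _
    have hL : 100 * (p:ℝ)^2 ≤ (max 0 β₀ + 10 * p) ^ 2 := by nlinarith
    have hT1 : (0:ℝ) ≤ (max 0 (S + β₀) - (1/2) * A) ^ 2 := sq_nonneg _
    have hT2 : (0:ℝ) ≤ (max 0 (2 * S + β₀) - A) ^ 2 := sq_nonneg _
    have e1 : (max 0 (S + β₀) - (1/2) * A) ^ 2 = 0 := by linarith
    have e2 : (max 0 (2 * S + β₀) - A) ^ 2 = 0 := by linarith
    have eSt : ∑ j, thetaFn (β j) β₀ = p := by linarith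
    have m1 : max 0 (S + β₀) = (1/2) * A := by
      have := (pow_eq_zero_iff (two_ne_zero)).mp e1; linarith
    have m2 : max 0 (2 * S + β₀) = A := by
      have := (pow_eq_zero_iff (two_ne_zero)).mp e2; linarith
    have hs1 : S + β₀ = (1/2) * A := by
      rcases le_or_gt (S + β₀) 0 with h | h
      · rw [max_eq_left h] at m1; linarith
      · rw [max_eq_right h.le] at m1; linarith
    have hs2 : 2 * S + β₀ = A := by
      rcases le_or_gt (2 * S + β₀) 0 with h | h
      · rw [max_eq_left h] at m2; linarith
      · rw [max_eq_right h.le] at m2; linarith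
    have hb0 : β₀ = 0 := by linarith
    subst hb0
    have hzero : ∀ j ∈ Finset.univ, thetaFn (β j) 0 - 1 = 0 := by
      rw [← Finset.sum_eq_zero_iff_of_nonneg]
      · rw [Finset.sum_sub_distrib, eSt]; simp
      · intro j _
        have := theta_ge_one (β j) 0 (by norm_num)
        linarith
    apply hno
    refine ⟨β, fun i => theta_eq_one (β i) (by have := hzero i (Finset.mem_univ i); linarith), ?_⟩
    linarith
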